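/- Let p : Ω → Λ be a covering of k-graphs, let (𝒢(Ω), i_Ω) and (𝒢(Λ), i_Λ) be fundamental groupoids, and let 𝒢(Λ) act on the vertex set Ω⁰ by the corresponding action. Then the map (p_*, s) : 𝒢(Ω) → 𝒢(Λ)*Ω⁰, sending a morphism c of 𝒢(Ω) to the pair (p_*(c), s(c)) in the transformation groupoid, is an isomorphism of groupoids. -/

import Mathlib

/-!
Arrows-only formalization of `k`-graphs (higher-rank graphs), their coverings,
fundamental groupoids, and groupoid actions, following Pask–Quigg–Raeburn,
"Coverings of k-graphs".

A small category is encoded by its set of arrows `A` together with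
source/range maps `src rng : A → A` (whose common image is the set of
identities = vertices) and a (guarded) total composition `comp : A → A → A`,
where `comp f g` is the composite "f after g", meaningful when `src f = rng g`.
A `k`-graph additionally has a degree map `deg : A → (Fin k → ℕ)` which is
functorial and satisfies the unique factorization property.
-/

namespace KGraphCovering

/-- A `k`-graph in arrows-only form. -/
structure KGraphStruct (k : ℕ) (A : Type) : Type where
  src : A → A
  rng : A → A
  comp : A → A → A
  deg : A → (Fin k → ℕ)
  src_src : ∀ f, src (src f) = src f
  rng_src : ∀ f, rng (src f) = src f
  src_rng : ∀ f, src (rng f) = rng f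
  rng_rng : ∀ f, rng (rng f) = rng f
  comp_src_id : ∀ f, comp f (src f) = f
  rng_comp_id : ∀ f, comp (rng f) f = f
  src_comp : ∀ f g, src f = rng g → src (comp f g) = src g
  rng_comp : ∀ f g, src f = rng g → rng (comp f g) = rng f
  assoc : ∀ f g h, src f = rng g → src g = rng h →
    comp (comp f g) h = comp f (comp g h)
  deg_comp : ∀ f g, src f = rng g → deg (comp f g) = deg f + deg g
  deg_src : ∀ f, deg (src f) = 0
  factor : ∀ f m n, deg f = m + n →
    ∃! q : A × A, src q.1 = rng q.2 ∧ deg q.1 = m ∧ deg q.2 = n ∧ comp q.1 q.2 = f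

namespace KGraphStruct

variable {k : ℕ} {A : Type}

/-- The vertices (objects) are the identity arrows. -/
def IsVertex (S : KGraphStruct k A) (v : A) : Prop := S.src v = v

/-- A `k`-graph is connected if the equivalence relation generated by
"there is a morphism from `v` to `u`" relates all pairs of vertices. -/
def Connected (S : KGraphStruct k A) : Prop :=
  ∀ u v, S.IsVertex u → S.IsVertex v →
    Relation.EqvGen (fun a b => ∃ f, S.rng f = a ∧ S.src f = b) u v

end KGraphStruct

/-- A groupoid in arrows-only form. -/
structure GroupoidStruct (B : Type) : Type where
  src : B → B
  rng : B → B
  comp : B → B → B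
  inv : B → B
  src_src : ∀ f, src (src f) = src f
  rng_src : ∀ f, rng (src f) = src f
  src_rng : ∀ f, src (rng f) = rng f
  rng_rng : ∀ f, rng (rng f) = rng f
  comp_src_id : ∀ f, comp f (src f) = f
  rng_comp_id : ∀ f, comp (rng f) f = f
  src_comp : ∀ f g, src f = rng g → src (comp f g) = src g
  rng_comp : ∀ f g, src f = rng g → rng (comp f g) = rng f
  assoc : ∀ f g h, src f = rng g → src g = rng h →
    comp (comp f g) h = comp f (comp g h)
  src_inv : ∀ f, src (inv f) = rng f
  rng_inv : ∀ f, rng (inv f) = src f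
  inv_comp_self : ∀ f, comp (inv f) f = src f
  comp_inv_self : ∀ f, comp f (inv f) = rng f

namespace GroupoidStruct

variable {B : Type}

/-- The vertices (objects) of a groupoid are the identity arrows. -/
def IsVertex (G : GroupoidStruct B) (v : B) : Prop := G.src v = v

/-- A subgroup of the isotropy group `x𝒢x`, as a set of arrows. -/
def IsSubgroupAt (G : GroupoidStruct B) (x : B) (H : Set B) : Prop :=
  (∀ a ∈ H, G.src a = x ∧ G.rng a = x) ∧ x ∈ H ∧
  (∀ a ∈ H, ∀ b ∈ H, G.comp a b ∈ H) ∧ (∀ a ∈ H, G.inv a ∈ H)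

/-- `K` is a conjugate of `H` in the isotropy group at `x`. -/
def ConjAt (G : GroupoidStruct B) (x : B) (H K : Set B) : Prop :=
  ∃ g, G.src g = x ∧ G.rng g = x ∧
    K = (fun a => G.comp (G.comp g a) (G.inv g)) '' H

/-- `H` is a normal subset of the isotropy group at `x`. -/
def IsNormalAt (G : GroupoidStruct B) (x : B) (H : Set B) : Prop :=
  ∀ g, G.src g = x → G.rng g = x → ∀ a ∈ H, G.comp (G.comp g a) (G.inv g) ∈ H

/-- The normalizer of `H` in the isotropy group at `x`. -/
def normalizerAt (G : GroupoidStruct B) (x : B) (H : Set B) : Set B :=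
  {g | G.src g = x ∧ G.rng g = x ∧
    (fun a => G.comp (G.comp g a) (G.inv g)) '' H = H}

end GroupoidStruct

/-- `f` is a morphism of `k`-graphs (a degree-preserving functor). -/
def IsKGraphHomFun {k : ℕ} {A A' : Type} (S : KGraphStruct k A)
    (T : KGraphStruct k A') (f : A → A') : Prop :=
  (∀ a, f (S.src a) = T.src (f a)) ∧
  (∀ a, f (S.rng a) = T.rng (f a)) ∧
  (∀ a b, S.src a = S.rng b → f (S.comp a b) = T.comp (f a) (f b)) ∧
  (∀ a, T.deg (f a) = S.deg a)

/-- `f` is a functor from a `k`-graph to a groupoid. -/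
def IsFunctorToGpdFun {k : ℕ} {A B : Type} (S : KGraphStruct k A)
    (G : GroupoidStruct B) (f : A → B) : Prop :=
  (∀ a, f (S.src a) = G.src (f a)) ∧
  (∀ a, f (S.rng a) = G.rng (f a)) ∧
  (∀ a b, S.src a = S.rng b → f (S.comp a b) = G.comp (f a) (f b))

/-- `f` is a morphism of groupoids (a functor). -/
def IsGpdHomFun {B C : Type} (G : GroupoidStruct B) (H : GroupoidStruct C)
    (f : B → C) : Prop :=
  (∀ a, f (G.src a) = H.src (f a)) ∧
  (∀ a, f (G.rng a) = H.rng (f a)) ∧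
  (∀ a b, G.src a = G.rng b → f (G.comp a b) = H.comp (f a) (f b))

/-- `p : Ω → Λ` is a covering of `k`-graphs: a surjective `k`-graph morphism
which maps `Ωv` bijectively onto `Λp(v)` and `vΩ` bijectively onto `p(v)Λ`
for every vertex `v` of `Ω`. -/
structure IsCovering {k : ℕ} {A A' : Type} (S : KGraphStruct k A')
    (T : KGraphStruct k A) (p : A' → A) : Prop where
  hom : IsKGraphHomFun S T p
  surj : Function.Surjective p
  src_inj : ∀ a b, S.src a = S.src b → p a = p b → a = b
  src_lift : ∀ v, S.IsVertex v → ∀ g, T.src g = p v → ∃ a, S.src a = v ∧ p a = g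
  rng_inj : ∀ a b, S.rng a = S.rng b → p a = p b → a = b
  rng_lift : ∀ v, S.IsVertex v → ∀ g, T.rng g = p v → ∃ a, S.rng a = v ∧ p a = g

/-- A fundamental groupoid of a `k`-graph `S`: a groupoid `G` whose object
set is identified with the vertex set of `S` via the canonical functor `i`
(which is bijective on objects), with the universal property that every
functor from `S` to a groupoid factors uniquely through `i`. -/
structure FundamentalGroupoid {k : ℕ} {A : Type} (S : KGraphStruct k A) :
    Type 1 where
  B : Type
  G : GroupoidStruct B
  i : A → B
  i_hom : IsFunctorToGpdFun S G i
  obj_bij : ∀ w, G.IsVertex w → ∃! v, S.IsVertex v ∧ i v = w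
  univ : ∀ {C : Type} (H : GroupoidStruct C) (F : A → C),
    IsFunctorToGpdFun S H F →
    ∃! F' : B → C, IsGpdHomFun G H F' ∧ ∀ a, F' (i a) = F a

/-- The fundamental group `π(Λ,x)` at a vertex `x`, as the isotropy of the
fundamental groupoid at `i x`. -/
def FundamentalGroupoid.pi1 {k : ℕ} {A : Type} {S : KGraphStruct k A}
    (F : FundamentalGroupoid S) (x : A) : Set F.B :=
  {a | F.G.src a = F.i x ∧ F.G.rng a = F.i x}

/-- An automorphism of the covering `p : Ω → Λ`. -/
def IsCoveringAut {k : ℕ} {A A' : Type} (Ω : KGraphStruct k A')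
    (Λ : KGraphStruct k A) (p : A' → A) (φ : A' → A') : Prop :=
  Function.Bijective φ ∧ IsKGraphHomFun Ω Ω φ ∧ ∀ a, p (φ a) = p a

/-- The action of the fundamental groupoid `F = 𝒢(Λ)` on the vertex set of a
covering `p : Ω → Λ`, determined by `i(p(λ)) ⬝ s(λ) = r(λ)`.  The fiber of a
vertex `w` of `Ω` is over the object `F.i (p w)`. -/
structure CorrespondingAction {k : ℕ} {A A' : Type} (Ω : KGraphStruct k A')
    (Λ : KGraphStruct k A) (F : FundamentalGroupoid Λ) (p : A' → A)
    (act : F.B → A' → A') : Prop where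
  act_vertex : ∀ a w, Ω.IsVertex w → F.G.src a = F.i (p w) →
    Ω.IsVertex (act a w) ∧ F.i (p (act a w)) = F.G.rng a
  act_id : ∀ w, Ω.IsVertex w → act (F.i (p w)) w = w
  act_comp : ∀ a b w, Ω.IsVertex w → F.G.src b = F.i (p w) →
    F.G.src a = F.G.rng b → act (F.G.comp a b) w = act a (act b w)
  act_cov : ∀ lam, act (F.i (p lam)) (Ω.src lam) = Ω.rng lam

/-- An action of a groupoid `G` on a set `V`, presented by an anchor map
`fib : V → B` (landing in vertices) and a guarded action map. -/
structure GpdActionStruct {B : Type} (G : GroupoidStruct B) (V : Type) :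
    Type where
  fib : V → B
  act : B → V → V
  fib_vertex : ∀ v, G.src (fib v) = fib v
  act_fib : ∀ a v, G.src a = fib v → fib (act a v) = G.rng a
  act_id : ∀ v, act (fib v) v = v
  act_comp : ∀ a b v, G.src b = fib v → G.src a = G.rng b →
    act (G.comp a b) v = act a (act b v)

namespace GpdActionStruct

variable {B V W : Type} {G : GroupoidStruct B}

/-- Transitivity of a groupoid action. -/
def Transitive (ρ : GpdActionStruct G V) : Prop :=
  ∀ u v : V, ∃ a, G.src a = ρ.fib v ∧ ρ.act a v = u

/-- The stability group of the action at `v`. -/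
def stab (ρ : GpdActionStruct G V) (v : V) : Set B :=
  {a | G.src a = ρ.fib v ∧ G.rng a = ρ.fib v ∧ ρ.act a v = v}

/-- Freeness of a groupoid action: all stability groups are trivial. -/
def Free (ρ : GpdActionStruct G V) : Prop :=
  ∀ (v : V) (a : B), a ∈ ρ.stab v → a = ρ.fib v

end GpdActionStruct

/-- A morphism of actions of the groupoid `G`: a fiber-preserving
equivariant map. -/
def IsActionHom {B V W : Type} {G : GroupoidStruct B}
    (ρ : GpdActionStruct G V) (σ : GpdActionStruct G W) (φ : V → W) : Prop :=
  (∀ v, σ.fib (φ v) = ρ.fib v) ∧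
  ∀ a v, G.src a = ρ.fib v → φ (ρ.act a v) = σ.act a (φ v)

/-- An automorphism of an action of the groupoid `G`. -/
def IsActionAut {B V : Type} {G : GroupoidStruct B}
    (ρ : GpdActionStruct G V) (φ : V → V) : Prop :=
  Function.Bijective φ ∧ IsActionHom ρ ρ φ

/-- A universal covering: a connected covering admitting a morphism of
coverings to every connected covering of the base. -/
def IsUniversalCovering {k : ℕ} {A A' : Type} (Ω : KGraphStruct k A')
    (Λ : KGraphStruct k A) (p : A' → A) : Prop :=
  IsCovering Ω Λ p ∧ Ω.Connected ∧
  ∀ (A'' : Type) (Sg : KGraphStruct k A'') (q : A'' → A),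
    IsCovering Sg Λ q → Sg.Connected →
    ∃ φ : A' → A'', IsKGraphHomFun Ω Sg φ ∧ ∀ a, q (φ a) = p a

end KGraphCovering
namespace KGraphCovering
namespace GroupoidStruct

variable {B : Type} (G : GroupoidStruct B)

lemma rng_of_src_eq {v : B} (h : G.src v = v) : G.rng v = v := by
  conv_lhs => rw [← h]
  rw [G.rng_src, h]

lemma inv_vertex {v : B} (h : G.src v = v) : G.inv v = v := by
  have h1 : G.inv v = G.comp (G.inv v) v := by
    conv_lhs => rw [← G.comp_src_id (G.inv v)]
    rw [G.src_inv, rng_of_src_eq G h]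
  rw [h1, G.inv_comp_self, h]

lemma inv_eq_of {c u : B} (h1 : G.src c = G.rng u) (h2 : G.comp c u = G.rng c) :
    G.inv c = u := by
  have : u = G.comp (G.rng u) u := (G.rng_comp_id u).symm
  rw [← h1] at this
  rw [this, ← G.inv_comp_self c,
    G.assoc _ _ _ (by rw [G.src_inv]) h1, h2, ← G.src_inv c, G.comp_src_id]

lemma inv_inv (f : B) : G.inv (G.inv f) = f := by
  refine inv_eq_of G ?_ ?_
  · rw [G.src_inv]
  · rw [G.inv_comp_self, G.rng_inv]

lemma inv_comp {f g : B} (h : G.src f = G.rng g) :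
    G.inv (G.comp f g) = G.comp (G.inv g) (G.inv f) := by
  have hrg : G.rng (G.comp (G.inv g) (G.inv f)) = G.src g := by
    rw [G.rng_comp _ _ (by rw [G.src_inv, G.rng_inv, h]), G.rng_inv]
  refine inv_eq_of G ?_ ?_
  · rw [G.src_comp _ _ h, hrg]
  · rw [G.rng_comp _ _ h]
    rw [G.assoc f g _ h (by rw [hrg])]
    have : G.comp g (G.comp (G.inv g) (G.inv f)) = G.inv f := by
      rw [← G.assoc g (G.inv g) (G.inv f) (by rw [G.rng_inv])
        (by rw [G.src_inv, G.rng_inv, h]), G.comp_inv_self, ← h, ← G.rng_inv f,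
        G.rng_comp_id]
    rw [this, G.comp_inv_self]

end GroupoidStruct

/-- A groupoid homomorphism commutes with inverses. -/
lemma IsGpdHomFun.map_inv {B C : Type} {G : GroupoidStruct B}
    {H : GroupoidStruct C} {F : B → C} (hF : IsGpdHomFun G H F) (c : B) :
    F (G.inv c) = H.inv (F c) := by
  symm
  refine GroupoidStruct.inv_eq_of H ?_ ?_
  · rw [← hF.1, ← hF.2.1, G.rng_inv]
  · rw [← hF.2.2 c (G.inv c) (by rw [G.rng_inv]), G.comp_inv_self, hF.2.1]




section Main

attribute [local instance] Classical.propDecidable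

variable {k : ℕ} {A A' : Type} {Λ : KGraphStruct k A} {Ω : KGraphStruct k A'}

lemma i_src_vertex {S : KGraphStruct k A} (F : FundamentalGroupoid S) {w : A}
    (hw : S.IsVertex w) : F.G.src (F.i w) = F.i w := by
  rw [← F.i_hom.1 w, hw]

lemma i_vertex_inj {S : KGraphStruct k A} (F : FundamentalGroupoid S) {v v' : A}
    (hv : S.IsVertex v) (hv' : S.IsVertex v') (h : F.i v = F.i v') : v = v' := by
  have := (F.obj_bij (F.i v) (i_src_vertex F hv)).unique
    (y₁ := v) (y₂ := v') ⟨hv, rfl⟩ ⟨hv', h.symm⟩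
  exact this

lemma KGraphStruct.rng_vertex {S : KGraphStruct k A} {w : A} (hw : S.IsVertex w) :
    S.rng w = w := by
  conv_lhs => rw [← hw]
  rw [S.rng_src, hw]

section Act

variable {FΛ : FundamentalGroupoid Λ} {FΩ : FundamentalGroupoid Ω}
  {p : A' → A} {pst : FΩ.B → FΛ.B} {act : FΛ.B → A' → A'}

lemma act_vert (hact : CorrespondingAction Ω Λ FΛ p act) {a : FΛ.B} {w : A'}
    (hw : Ω.IsVertex w) (h : FΛ.i (p w) = FΛ.G.src a) : Ω.IsVertex (act a w) :=
  (hact.act_vertex a w hw h.symm).1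

lemma act_fib (hact : CorrespondingAction Ω Λ FΛ p act) {a : FΛ.B} {w : A'}
    (hw : Ω.IsVertex w) (h : FΛ.i (p w) = FΛ.G.src a) :
    FΛ.i (p (act a w)) = FΛ.G.rng a :=
  (hact.act_vertex a w hw h.symm).2

lemma act_id' (hact : CorrespondingAction Ω Λ FΛ p act) {x : FΛ.B} {w : A'}
    (hw : Ω.IsVertex w) (h : FΛ.i (p w) = x) : act x w = w := by
  rw [← h]; exact hact.act_id w hw

lemma act_inv_act (hact : CorrespondingAction Ω Λ FΛ p act) {a : FΛ.B} {w : A'}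
    (hw : Ω.IsVertex w) (h : FΛ.i (p w) = FΛ.G.src a) :
    act (FΛ.G.inv a) (act a w) = w := by
  rw [← hact.act_comp (FΛ.G.inv a) a w hw h.symm (by rw [FΛ.G.src_inv]),
    FΛ.G.inv_comp_self, act_id' hact hw h]

lemma act_act_inv (hact : CorrespondingAction Ω Λ FΛ p act) {a : FΛ.B} {w : A'}
    (hw : Ω.IsVertex w) (h : FΛ.i (p w) = FΛ.G.rng a) :
    act a (act (FΛ.G.inv a) w) = w := by
  rw [← hact.act_comp a (FΛ.G.inv a) w hw (by rw [FΛ.G.src_inv]; exact h.symm)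
    (by rw [FΛ.G.rng_inv]), FΛ.G.comp_inv_self, act_id' hact hw h]

end Act

/-- `f` is a family of lifts of `a` (one starting at each vertex over `s(a)`),
and `g` a corresponding family of lifts of `a⁻¹`. -/
def GoodFam (FΛ : FundamentalGroupoid Λ) (FΩ : FundamentalGroupoid Ω)
    (p : A' → A) (pst : FΩ.B → FΛ.B) (act : FΛ.B → A' → A')
    (a : FΛ.B) (f g : A' → FΩ.B) : Prop :=
  (∀ w, Ω.IsVertex w → FΛ.i (p w) = FΛ.G.src a →
      FΩ.G.src (f w) = FΩ.i w ∧ pst (f w) = a ∧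
      FΩ.G.rng (f w) = FΩ.i (act a w)) ∧
  (∀ w, ¬ (Ω.IsVertex w ∧ FΛ.i (p w) = FΛ.G.src a) → f w = FΩ.i w) ∧
  (∀ w, Ω.IsVertex w → FΛ.i (p w) = FΛ.G.rng a →
      FΩ.G.src (g w) = FΩ.i w ∧ pst (g w) = FΛ.G.inv a ∧
      FΩ.G.rng (g w) = FΩ.i (act (FΛ.G.inv a) w)) ∧
  (∀ w, ¬ (Ω.IsVertex w ∧ FΛ.i (p w) = FΛ.G.rng a) → g w = FΩ.i w) ∧
  (∀ w, Ω.IsVertex w → FΛ.i (p w) = FΛ.G.src a → g (act a w) = FΩ.G.inv (f w))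

section Good

variable {FΛ : FundamentalGroupoid Λ} {FΩ : FundamentalGroupoid Ω}
  {p : A' → A} {pst : FΩ.B → FΛ.B} {act : FΛ.B → A' → A'}

lemma good_vertex (hpsti : ∀ a, pst (FΩ.i a) = FΛ.i (p a))
    (hact : CorrespondingAction Ω Λ FΛ p act) {x : FΛ.B}
    (hx : FΛ.G.src x = x) :
    GoodFam FΛ FΩ p pst act x (fun w => FΩ.i w) (fun w => FΩ.i w) := by
  have hrx : FΛ.G.rng x = x := FΛ.G.rng_of_src_eq hx
  have hinvx : FΛ.G.inv x = x := FΛ.G.inv_vertex hx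
  refine ⟨?_, fun _ _ => rfl, ?_, fun _ _ => rfl, ?_⟩
  · intro w hw hpw
    rw [hx] at hpw
    refine ⟨i_src_vertex FΩ hw, by rw [hpsti, hpw], ?_⟩
    rw [FΩ.G.rng_of_src_eq (i_src_vertex FΩ hw), act_id' hact hw hpw]
  · intro w hw hpw
    rw [hrx] at hpw
    refine ⟨i_src_vertex FΩ hw, by rw [hpsti, hpw, hinvx], ?_⟩
    rw [FΩ.G.rng_of_src_eq (i_src_vertex FΩ hw), hinvx, act_id' hact hw hpw]
  · intro w hw hpw
    rw [hx] at hpw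
    rw [act_id' hact hw hpw, FΩ.G.inv_vertex (i_src_vertex FΩ hw)]

lemma GoodFam.f_act_inv (hact : CorrespondingAction Ω Λ FΛ p act)
    {a : FΛ.B} {f g : A' → FΩ.B} (h : GoodFam FΛ FΩ p pst act a f g)
    {w' : A'} (hw' : Ω.IsVertex w') (hr : FΛ.i (p w') = FΛ.G.rng a) :
    f (act (FΛ.G.inv a) w') = FΩ.G.inv (g w') := by
  set w := act (FΛ.G.inv a) w' with hwdef
  have hwv : Ω.IsVertex w := act_vert hact hw' (by rw [FΛ.G.src_inv]; exact hr)
  have hwi : FΛ.i (p w) = FΛ.G.src a := by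
    rw [hwdef, act_fib hact hw' (by rw [FΛ.G.src_inv]; exact hr), FΛ.G.rng_inv]
  have h5 := h.2.2.2.2 w hwv hwi
  rw [hwdef, act_act_inv hact hw' hr] at h5
  rw [h5, FΩ.G.inv_inv]

lemma GoodFam.inv (hact : CorrespondingAction Ω Λ FΛ p act)
    {a : FΛ.B} {f g : A' → FΩ.B} (h : GoodFam FΛ FΩ p pst act a f g) :
    GoodFam FΛ FΩ p pst act (FΛ.G.inv a) g f := by
  refine ⟨?_, ?_, ?_, ?_, ?_⟩
  · intro w hw hpw
    rw [FΛ.G.src_inv] at hpw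
    exact h.2.2.1 w hw hpw
  · intro w hw
    rw [FΛ.G.src_inv] at hw
    exact h.2.2.2.1 w hw
  · intro w hw hpw
    rw [FΛ.G.rng_inv] at hpw
    have := h.1 w hw hpw
    rw [FΛ.G.inv_inv]
    exact this
  · intro w hw
    rw [FΛ.G.rng_inv] at hw
    exact h.2.1 w hw
  · intro w hw hpw
    rw [FΛ.G.src_inv] at hpw
    exact GoodFam.f_act_inv hact h hw hpw

lemma GoodFam.comp (hpst : IsGpdHomFun FΩ.G FΛ.G pst)
    (hact : CorrespondingAction Ω Λ FΛ p act)
    {a b : FΛ.B} {fa ga fb gb : A' → FΩ.B}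
    (hab : FΛ.G.src a = FΛ.G.rng b)
    (ha : GoodFam FΛ FΩ p pst act a fa ga)
    (hb : GoodFam FΛ FΩ p pst act b fb gb) :
    GoodFam FΛ FΩ p pst act (FΛ.G.comp a b)
      (fun w => if Ω.IsVertex w ∧ FΛ.i (p w) = FΛ.G.src b then
        FΩ.G.comp (fa (act b w)) (fb w) else FΩ.i w)
      (fun w => if Ω.IsVertex w ∧ FΛ.i (p w) = FΛ.G.rng a then
        FΩ.G.comp (gb (act (FΛ.G.inv a) w)) (ga w) else FΩ.i w) := by
  have hsc : FΛ.G.src (FΛ.G.comp a b) = FΛ.G.src b := FΛ.G.src_comp _ _ hab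
  have hrc : FΛ.G.rng (FΛ.G.comp a b) = FΛ.G.rng a := FΛ.G.rng_comp _ _ hab
  have hic : FΛ.G.inv (FΛ.G.comp a b) = FΛ.G.comp (FΛ.G.inv b) (FΛ.G.inv a) :=
    FΛ.G.inv_comp hab
  refine ⟨?_, ?_, ?_, ?_, ?_⟩
  · intro w hw hpw
    rw [hsc] at hpw
    dsimp only
    rw [if_pos ⟨hw, hpw⟩]
    obtain ⟨hb1, hb2, hb3⟩ := hb.1 w hw hpw
    have hw2v : Ω.IsVertex (act b w) := act_vert hact hw hpw
    have hw2i : FΛ.i (p (act b w)) = FΛ.G.src a := by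
      rw [act_fib hact hw hpw, hab]
    obtain ⟨ha1, ha2, ha3⟩ := ha.1 (act b w) hw2v hw2i
    have hguard : FΩ.G.src (fa (act b w)) = FΩ.G.rng (fb w) := by
      rw [ha1, hb3]
    refine ⟨?_, ?_, ?_⟩
    · rw [FΩ.G.src_comp _ _ hguard, hb1]
    · rw [hpst.2.2 _ _ hguard, ha2, hb2]
    · rw [FΩ.G.rng_comp _ _ hguard, ha3,
        hact.act_comp a b w hw hpw.symm hab]
  · intro w hw
    rw [hsc] at hw
    dsimp only
    rw [if_neg hw]
  · intro w' hw' hpw'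
    rw [hrc] at hpw'
    dsimp only
    rw [if_pos ⟨hw', hpw'⟩]
    obtain ⟨ha1, ha2, ha3⟩ := ha.2.2.1 w' hw' hpw'
    set w2 := act (FΛ.G.inv a) w' with hw2def
    have hw2v : Ω.IsVertex w2 := act_vert hact hw' (by rw [FΛ.G.src_inv]; exact hpw')
    have hw2i : FΛ.i (p w2) = FΛ.G.rng b := by
      rw [hw2def, act_fib hact hw' (by rw [FΛ.G.src_inv]; exact hpw'),
        FΛ.G.rng_inv, hab]
    obtain ⟨hb1, hb2, hb3⟩ := hb.2.2.1 w2 hw2v hw2i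
    have hguard : FΩ.G.src (gb w2) = FΩ.G.rng (ga w') := by
      rw [hb1, ha3]
    refine ⟨?_, ?_, ?_⟩
    · rw [FΩ.G.src_comp _ _ hguard, ha1]
    · rw [hpst.2.2 _ _ hguard, ha2, hb2, hic]
    · rw [FΩ.G.rng_comp _ _ hguard, hb3, hic,
        hact.act_comp (FΛ.G.inv b) (FΛ.G.inv a) w' hw'
          (by rw [FΛ.G.src_inv]; exact hpw'.symm)
          (by rw [FΛ.G.src_inv, FΛ.G.rng_inv, hab])]
  · intro w hw
    rw [hrc] at hw
    dsimp only
    rw [if_neg hw]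
  · intro w hw hpw
    rw [hsc] at hpw
    have hw2v : Ω.IsVertex (act b w) := act_vert hact hw hpw
    have hw2i : FΛ.i (p (act b w)) = FΛ.G.src a := by
      rw [act_fib hact hw hpw, hab]
    have hw3v : Ω.IsVertex (act a (act b w)) := act_vert hact hw2v hw2i
    have hw3i : FΛ.i (p (act a (act b w))) = FΛ.G.rng a := act_fib hact hw2v hw2i
    dsimp only
    rw [hact.act_comp a b w hw hpw.symm hab]
    rw [if_pos ⟨hw3v, hw3i⟩, if_pos ⟨hw, hpw⟩]
    rw [act_inv_act hact hw2v hw2i]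
    rw [ha.2.2.2.2 (act b w) hw2v hw2i, hb.2.2.2.2 w hw hpw]
    rw [← FΩ.G.inv_comp (by rw [(ha.1 _ hw2v hw2i).1, (hb.1 w hw hpw).2.2])]

end Good

end Main


section EGpdSec

variable {k : ℕ} {A A' : Type} {Λ : KGraphStruct k A} {Ω : KGraphStruct k A'}

/-- Carrier of the groupoid of "lift families". -/
abbrev ECar (FΛ : FundamentalGroupoid Λ) (FΩ : FundamentalGroupoid Ω)
    (p : A' → A) (pst : FΩ.B → FΛ.B) (act : FΛ.B → A' → A') : Type :=
  {e : FΛ.B × (A' → FΩ.B) × (A' → FΩ.B) //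
    GoodFam FΛ FΩ p pst act e.1 e.2.1 e.2.2}

variable {FΛ : FundamentalGroupoid Λ} {FΩ : FundamentalGroupoid Ω}
  {p : A' → A} {pst : FΩ.B → FΛ.B} {act : FΛ.B → A' → A'}

attribute [local instance] Classical.propDecidable

/-- The groupoid of lift families. -/
noncomputable def EGpd (hpsti : ∀ a, pst (FΩ.i a) = FΛ.i (p a))
    (hpst : IsGpdHomFun FΩ.G FΛ.G pst)
    (hact : CorrespondingAction Ω Λ FΛ p act) :
    GroupoidStruct (ECar FΛ FΩ p pst act) where
  src e := ⟨(FΛ.G.src e.1.1, fun w => FΩ.i w, fun w => FΩ.i w),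
    good_vertex hpsti hact (FΛ.G.src_src e.1.1)⟩
  rng e := ⟨(FΛ.G.rng e.1.1, fun w => FΩ.i w, fun w => FΩ.i w),
    good_vertex hpsti hact (FΛ.G.src_rng e.1.1)⟩
  comp x y :=
    if h : FΛ.G.src x.1.1 = FΛ.G.rng y.1.1 then
      ⟨(FΛ.G.comp x.1.1 y.1.1,
        fun w => if Ω.IsVertex w ∧ FΛ.i (p w) = FΛ.G.src y.1.1 then
          FΩ.G.comp (x.1.2.1 (act y.1.1 w)) (y.1.2.1 w) else FΩ.i w,
        fun w => if Ω.IsVertex w ∧ FΛ.i (p w) = FΛ.G.rng x.1.1 then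
          FΩ.G.comp (y.1.2.2 (act (FΛ.G.inv x.1.1) w)) (x.1.2.2 w) else FΩ.i w),
        GoodFam.comp hpst hact h x.2 y.2⟩
    else x
  inv e := ⟨(FΛ.G.inv e.1.1, e.1.2.2, e.1.2.1), GoodFam.inv hact e.2⟩
  src_src e := Subtype.ext (by dsimp only; rw [FΛ.G.src_src])
  rng_src e := Subtype.ext (by dsimp only; rw [FΛ.G.rng_src])
  src_rng e := Subtype.ext (by dsimp only; rw [FΛ.G.src_rng])
  rng_rng e := Subtype.ext (by dsimp only; rw [FΛ.G.rng_rng])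
  comp_src_id e := by
    obtain ⟨⟨a, f, g⟩, hg⟩ := e
    dsimp only at hg
    apply Subtype.ext
    dsimp only
    rw [dif_pos (show FΛ.G.src a = FΛ.G.rng (FΛ.G.src a) by
      rw [FΛ.G.rng_src])]
    dsimp only
    simp only [Prod.mk.injEq]
    refine ⟨FΛ.G.comp_src_id _, funext fun w => ?_, funext fun w => ?_⟩
    · rw [FΛ.G.src_src]
      by_cases hc : Ω.IsVertex w ∧ FΛ.i (p w) = FΛ.G.src a
      · rw [if_pos hc, act_id' hact hc.1 hc.2, ← (hg.1 w hc.1 hc.2).1,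
          FΩ.G.comp_src_id]
      · rw [if_neg hc, hg.2.1 w hc]
    · by_cases hc : Ω.IsVertex w ∧ FΛ.i (p w) = FΛ.G.rng a
      · rw [if_pos hc, ← (hg.2.2.1 w hc.1 hc.2).2.2, FΩ.G.rng_comp_id]
      · rw [if_neg hc, hg.2.2.2.1 w hc]
  rng_comp_id e := by
    obtain ⟨⟨a, f, g⟩, hg⟩ := e
    dsimp only at hg
    apply Subtype.ext
    dsimp only
    rw [dif_pos (show FΛ.G.src (FΛ.G.rng a) = FΛ.G.rng a by
      rw [FΛ.G.src_rng])]
    dsimp only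
    simp only [Prod.mk.injEq]
    refine ⟨FΛ.G.rng_comp_id _, funext fun w => ?_, funext fun w => ?_⟩
    · by_cases hc : Ω.IsVertex w ∧ FΛ.i (p w) = FΛ.G.src a
      · rw [if_pos hc, ← (hg.1 w hc.1 hc.2).2.2, FΩ.G.rng_comp_id]
      · rw [if_neg hc, hg.2.1 w hc]
    · rw [FΛ.G.rng_rng]
      by_cases hc : Ω.IsVertex w ∧ FΛ.i (p w) = FΛ.G.rng a
      · rw [if_pos hc, FΛ.G.inv_vertex (FΛ.G.src_rng a),
          act_id' hact hc.1 hc.2, ← (hg.2.2.1 w hc.1 hc.2).1, FΩ.G.comp_src_id]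
      · rw [if_neg hc, hg.2.2.2.1 w hc]
  src_comp x y h := by
    have hab : FΛ.G.src x.1.1 = FΛ.G.rng y.1.1 :=
      congrArg (fun t : ECar FΛ FΩ p pst act => t.1.1) h
    apply Subtype.ext
    dsimp only
    rw [dif_pos hab]
    dsimp only
    rw [FΛ.G.src_comp _ _ hab]
  rng_comp x y h := by
    have hab : FΛ.G.src x.1.1 = FΛ.G.rng y.1.1 :=
      congrArg (fun t : ECar FΛ FΩ p pst act => t.1.1) h
    apply Subtype.ext
    dsimp only
    rw [dif_pos hab]
    dsimp only
    rw [FΛ.G.rng_comp _ _ hab]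
  assoc x y z hxy hyz := by
    have hab : FΛ.G.src x.1.1 = FΛ.G.rng y.1.1 :=
      congrArg (fun t : ECar FΛ FΩ p pst act => t.1.1) hxy
    have hbc : FΛ.G.src y.1.1 = FΛ.G.rng z.1.1 :=
      congrArg (fun t : ECar FΛ FΩ p pst act => t.1.1) hyz
    apply Subtype.ext
    rw [dif_pos hab, dif_pos hbc]
    dsimp only
    rw [dif_pos (show FΛ.G.src (FΛ.G.comp x.1.1 y.1.1) = FΛ.G.rng z.1.1 by
          rw [FΛ.G.src_comp _ _ hab, hbc]),
      dif_pos (show FΛ.G.src x.1.1 = FΛ.G.rng (FΛ.G.comp y.1.1 z.1.1) by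
          rw [FΛ.G.rng_comp _ _ hbc, hab])]
    dsimp only
    simp only [Prod.mk.injEq]
    refine ⟨FΛ.G.assoc _ _ _ hab hbc, funext fun w => ?_, funext fun w => ?_⟩
    · rw [FΛ.G.src_comp _ _ hbc]
      by_cases hc : Ω.IsVertex w ∧ FΛ.i (p w) = FΛ.G.src z.1.1
      · have hY1 : Ω.IsVertex (act z.1.1 w) := act_vert hact hc.1 hc.2
        have hY2 : FΛ.i (p (act z.1.1 w)) = FΛ.G.src y.1.1 := by
          rw [act_fib hact hc.1 hc.2]; exact hbc.symm
        have hX1 : Ω.IsVertex (act y.1.1 (act z.1.1 w)) := act_vert hact hY1 hY2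
        have hX2 : FΛ.i (p (act y.1.1 (act z.1.1 w))) = FΛ.G.src x.1.1 := by
          rw [act_fib hact hY1 hY2]; exact hab.symm
        simp only [if_pos hc, if_pos (show Ω.IsVertex (act z.1.1 w) ∧
          FΛ.i (p (act z.1.1 w)) = FΛ.G.src y.1.1 from ⟨hY1, hY2⟩)]
        rw [hact.act_comp y.1.1 z.1.1 w hc.1 hc.2.symm hbc]
        refine FΩ.G.assoc _ _ _ ?_ ?_
        · rw [(x.2.1 _ hX1 hX2).1, (y.2.1 _ hY1 hY2).2.2]
        · rw [(y.2.1 _ hY1 hY2).1, (z.2.1 _ hc.1 hc.2).2.2]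
      · simp only [if_neg hc]
    · rw [FΛ.G.rng_comp _ _ hab]
      by_cases hc : Ω.IsVertex w ∧ FΛ.i (p w) = FΛ.G.rng x.1.1
      · have hX1v : Ω.IsVertex (act (FΛ.G.inv x.1.1) w) :=
          act_vert hact hc.1 (by rw [FΛ.G.src_inv]; exact hc.2)
        have hX1i : FΛ.i (p (act (FΛ.G.inv x.1.1) w)) = FΛ.G.rng y.1.1 := by
          rw [act_fib hact hc.1 (by rw [FΛ.G.src_inv]; exact hc.2),
            FΛ.G.rng_inv, hab]
        have hX2v : Ω.IsVertex (act (FΛ.G.inv y.1.1) (act (FΛ.G.inv x.1.1) w)) :=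
          act_vert hact hX1v (by rw [FΛ.G.src_inv]; exact hX1i)
        have hX2i : FΛ.i (p (act (FΛ.G.inv y.1.1) (act (FΛ.G.inv x.1.1) w))) =
            FΛ.G.rng z.1.1 := by
          rw [act_fib hact hX1v (by rw [FΛ.G.src_inv]; exact hX1i),
            FΛ.G.rng_inv, hbc]
        simp only [if_pos hc, if_pos (show Ω.IsVertex (act (FΛ.G.inv x.1.1) w) ∧
          FΛ.i (p (act (FΛ.G.inv x.1.1) w)) = FΛ.G.rng y.1.1 from ⟨hX1v, hX1i⟩)]
        rw [FΛ.G.inv_comp hab,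
          hact.act_comp (FΛ.G.inv y.1.1) (FΛ.G.inv x.1.1) w hc.1
            (by rw [FΛ.G.src_inv]; exact hc.2.symm)
            (by rw [FΛ.G.src_inv, FΛ.G.rng_inv, hab])]
        refine (FΩ.G.assoc _ _ _ ?_ ?_).symm
        · rw [(z.2.2.2.1 _ hX2v hX2i).1, (y.2.2.2.1 _ hX1v hX1i).2.2]
        · rw [(y.2.2.2.1 _ hX1v hX1i).1, (x.2.2.2.1 _ hc.1 hc.2).2.2]
      · simp only [if_neg hc]
  src_inv e := Subtype.ext (by dsimp only; rw [FΛ.G.src_inv])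
  rng_inv e := Subtype.ext (by dsimp only; rw [FΛ.G.rng_inv])
  inv_comp_self e := by
    obtain ⟨⟨a, f, g⟩, hg⟩ := e
    dsimp only at hg
    apply Subtype.ext
    dsimp only
    rw [dif_pos (show FΛ.G.src (FΛ.G.inv a) = FΛ.G.rng a by
      rw [FΛ.G.src_inv])]
    dsimp only
    simp only [Prod.mk.injEq]
    refine ⟨FΛ.G.inv_comp_self _, funext fun w => ?_, funext fun w => ?_⟩
    · by_cases hc : Ω.IsVertex w ∧ FΛ.i (p w) = FΛ.G.src a
      · rw [if_pos hc, hg.2.2.2.2 w hc.1 hc.2, FΩ.G.inv_comp_self,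
          (hg.1 w hc.1 hc.2).1]
      · rw [if_neg hc]
    · rw [FΛ.G.rng_inv]
      by_cases hc : Ω.IsVertex w ∧ FΛ.i (p w) = FΛ.G.src a
      · rw [if_pos hc, FΛ.G.inv_inv, hg.2.2.2.2 w hc.1 hc.2,
          FΩ.G.inv_comp_self, (hg.1 w hc.1 hc.2).1]
      · rw [if_neg hc]
  comp_inv_self e := by
    obtain ⟨⟨a, f, g⟩, hg⟩ := e
    dsimp only at hg
    apply Subtype.ext
    dsimp only
    rw [dif_pos (show FΛ.G.src a = FΛ.G.rng (FΛ.G.inv a) by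
      rw [FΛ.G.rng_inv])]
    dsimp only
    simp only [Prod.mk.injEq]
    refine ⟨FΛ.G.comp_inv_self _, funext fun w => ?_, funext fun w => ?_⟩
    · rw [FΛ.G.src_inv]
      by_cases hc : Ω.IsVertex w ∧ FΛ.i (p w) = FΛ.G.rng a
      · rw [if_pos hc, GoodFam.f_act_inv hact hg hc.1 hc.2,
          FΩ.G.inv_comp_self, (hg.2.2.1 w hc.1 hc.2).1]
      · rw [if_neg hc]
    · by_cases hc : Ω.IsVertex w ∧ FΛ.i (p w) = FΛ.G.rng a
      · rw [if_pos hc, GoodFam.f_act_inv hact hg hc.1 hc.2,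
          FΩ.G.inv_comp_self, (hg.2.2.1 w hc.1 hc.2).1]
      · rw [if_neg hc]

end EGpdSec
section TSec

variable {k : ℕ} {A A' : Type} {Λ : KGraphStruct k A} {Ω : KGraphStruct k A'}
  {FΛ : FundamentalGroupoid Λ} {FΩ : FundamentalGroupoid Ω}
  {p : A' → A} {pst : FΩ.B → FΛ.B} {act : FΛ.B → A' → A'}

attribute [local instance] Classical.propDecidable

/-- The transformation groupoid `𝒢(Λ) * Ω⁰`. -/
noncomputable def TGpd (hact : CorrespondingAction Ω Λ FΛ p act) :
    GroupoidStruct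
      {q : FΛ.B × A' // Ω.IsVertex q.2 ∧ FΛ.G.src q.1 = FΛ.i (p q.2)} where
  src t := ⟨(FΛ.G.src t.1.1, t.1.2),
    ⟨t.2.1, by rw [FΛ.G.src_src]; exact t.2.2⟩⟩
  rng t := ⟨(FΛ.G.rng t.1.1, act t.1.1 t.1.2),
    ⟨act_vert hact t.2.1 t.2.2.symm,
      by rw [FΛ.G.src_rng]; exact (act_fib hact t.2.1 t.2.2.symm).symm⟩⟩
  comp x y :=
    if h : FΛ.G.src x.1.1 = FΛ.G.rng y.1.1 then
      ⟨(FΛ.G.comp x.1.1 y.1.1, y.1.2),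
        ⟨y.2.1, by rw [FΛ.G.src_comp _ _ h]; exact y.2.2⟩⟩
    else x
  inv t := ⟨(FΛ.G.inv t.1.1, act t.1.1 t.1.2),
    ⟨act_vert hact t.2.1 t.2.2.symm,
      by rw [FΛ.G.src_inv]; exact (act_fib hact t.2.1 t.2.2.symm).symm⟩⟩
  src_src t := Subtype.ext (by dsimp only; rw [FΛ.G.src_src])
  rng_src t := Subtype.ext (by
    dsimp only
    rw [FΛ.G.rng_src, act_id' hact t.2.1 t.2.2.symm])
  src_rng t := Subtype.ext (by dsimp only; rw [FΛ.G.src_rng])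
  rng_rng t := Subtype.ext (by
    dsimp only
    rw [FΛ.G.rng_rng, act_id' hact (act_vert hact t.2.1 t.2.2.symm)
      (act_fib hact t.2.1 t.2.2.symm)])
  comp_src_id t := by
    apply Subtype.ext
    dsimp only
    rw [dif_pos (show FΛ.G.src t.1.1 = FΛ.G.rng (FΛ.G.src t.1.1) by
      rw [FΛ.G.rng_src])]
    dsimp only
    rw [FΛ.G.comp_src_id]
  rng_comp_id t := by
    apply Subtype.ext
    dsimp only
    rw [dif_pos (show FΛ.G.src (FΛ.G.rng t.1.1) = FΛ.G.rng t.1.1 by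
      rw [FΛ.G.src_rng])]
    dsimp only
    rw [FΛ.G.rng_comp_id]
  src_comp x y h := by
    have hab : FΛ.G.src x.1.1 = FΛ.G.rng y.1.1 :=
      congrArg (fun t : {q : FΛ.B × A' //
        Ω.IsVertex q.2 ∧ FΛ.G.src q.1 = FΛ.i (p q.2)} => t.1.1) h
    apply Subtype.ext
    dsimp only
    rw [dif_pos hab]
    dsimp only
    rw [FΛ.G.src_comp _ _ hab]
  rng_comp x y h := by
    have hab : FΛ.G.src x.1.1 = FΛ.G.rng y.1.1 :=
      congrArg (fun t : {q : FΛ.B × A' //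
        Ω.IsVertex q.2 ∧ FΛ.G.src q.1 = FΛ.i (p q.2)} => t.1.1) h
    have hw : x.1.2 = act y.1.1 y.1.2 :=
      congrArg (fun t : {q : FΛ.B × A' //
        Ω.IsVertex q.2 ∧ FΛ.G.src q.1 = FΛ.i (p q.2)} => t.1.2) h
    apply Subtype.ext
    dsimp only
    rw [dif_pos hab]
    dsimp only
    rw [FΛ.G.rng_comp _ _ hab,
      hact.act_comp x.1.1 y.1.1 y.1.2 y.2.1 y.2.2 hab, ← hw]
  assoc x y z hxy hyz := by
    have hab : FΛ.G.src x.1.1 = FΛ.G.rng y.1.1 :=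
      congrArg (fun t : {q : FΛ.B × A' //
        Ω.IsVertex q.2 ∧ FΛ.G.src q.1 = FΛ.i (p q.2)} => t.1.1) hxy
    have hbc : FΛ.G.src y.1.1 = FΛ.G.rng z.1.1 :=
      congrArg (fun t : {q : FΛ.B × A' //
        Ω.IsVertex q.2 ∧ FΛ.G.src q.1 = FΛ.i (p q.2)} => t.1.1) hyz
    apply Subtype.ext
    rw [dif_pos hab, dif_pos hbc]
    dsimp only
    rw [dif_pos (show FΛ.G.src (FΛ.G.comp x.1.1 y.1.1) = FΛ.G.rng z.1.1 by
        rw [FΛ.G.src_comp _ _ hab, hbc]),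
      dif_pos (show FΛ.G.src x.1.1 = FΛ.G.rng (FΛ.G.comp y.1.1 z.1.1) by
        rw [FΛ.G.rng_comp _ _ hbc, hab])]
    dsimp only
    rw [FΛ.G.assoc _ _ _ hab hbc]
  src_inv t := Subtype.ext (by dsimp only; rw [FΛ.G.src_inv])
  rng_inv t := Subtype.ext (by
    dsimp only
    rw [FΛ.G.rng_inv, act_inv_act hact t.2.1 t.2.2.symm])
  inv_comp_self t := by
    apply Subtype.ext
    dsimp only
    rw [dif_pos (show FΛ.G.src (FΛ.G.inv t.1.1) = FΛ.G.rng t.1.1 by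
      rw [FΛ.G.src_inv])]
    dsimp only
    rw [FΛ.G.inv_comp_self]
  comp_inv_self t := by
    apply Subtype.ext
    dsimp only
    rw [dif_pos (show FΛ.G.src t.1.1 = FΛ.G.rng (FΛ.G.inv t.1.1) by
      rw [FΛ.G.rng_inv])]
    dsimp only
    rw [FΛ.G.comp_inv_self]

lemma TGpd_comp_val (hact : CorrespondingAction Ω Λ FΛ p act)
    (x y : {q : FΛ.B × A' // Ω.IsVertex q.2 ∧ FΛ.G.src q.1 = FΛ.i (p q.2)})
    (h : FΛ.G.src x.1.1 = FΛ.G.rng y.1.1) :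
    ((TGpd hact).comp x y).1 = (FΛ.G.comp x.1.1 y.1.1, y.1.2) := by
  unfold TGpd
  dsimp only
  rw [dif_pos h]

/-- The canonical functor `Ω → 𝒢(Λ) * Ω⁰`. -/
def Fmap (FΛ : FundamentalGroupoid Λ) (hp : IsCovering Ω Λ p) :
    A' → {q : FΛ.B × A' // Ω.IsVertex q.2 ∧ FΛ.G.src q.1 = FΛ.i (p q.2)} :=
  fun lam => ⟨(FΛ.i (p lam), Ω.src lam),
    ⟨Ω.src_src lam, by rw [← FΛ.i_hom.1, hp.hom.1 lam]⟩⟩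

lemma hFmap (hp : IsCovering Ω Λ p)
    (hact : CorrespondingAction Ω Λ FΛ p act) :
    IsFunctorToGpdFun Ω (TGpd hact) (Fmap FΛ hp) := by
  refine ⟨fun lam => ?_, fun lam => ?_, fun lam mu h => ?_⟩
  · apply Subtype.ext
    show (FΛ.i (p (Ω.src lam)), Ω.src (Ω.src lam)) =
      (FΛ.G.src (FΛ.i (p lam)), Ω.src lam)
    rw [hp.hom.1 lam, FΛ.i_hom.1, Ω.src_src]
  · apply Subtype.ext
    show (FΛ.i (p (Ω.rng lam)), Ω.src (Ω.rng lam)) =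
      (FΛ.G.rng (FΛ.i (p lam)), act (FΛ.i (p lam)) (Ω.src lam))
    rw [hp.hom.2.1 lam, FΛ.i_hom.2.1, Ω.src_rng, hact.act_cov lam]
  · have hg : FΛ.G.src (FΛ.i (p lam)) = FΛ.G.rng (FΛ.i (p mu)) := by
      rw [← FΛ.i_hom.1, ← FΛ.i_hom.2.1, ← hp.hom.1, ← hp.hom.2.1, h]
    apply Subtype.ext
    rw [TGpd_comp_val hact _ _ hg]
    show (FΛ.i (p (Ω.comp lam mu)), Ω.src (Ω.comp lam mu)) = _
    have hpg : Λ.src (p lam) = Λ.rng (p mu) := by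
      rw [← hp.hom.1, ← hp.hom.2.1, h]
    rw [hp.hom.2.2.1 lam mu h, FΛ.i_hom.2.2 _ _ hpg, Ω.src_comp _ _ h]
    rfl

end TSec
section LSec

variable {k : ℕ} {A A' : Type} {Λ : KGraphStruct k A} {Ω : KGraphStruct k A'}
  {FΛ : FundamentalGroupoid Λ} {FΩ : FundamentalGroupoid Ω}
  {p : A' → A} {pst : FΩ.B → FΛ.B} {act : FΛ.B → A' → A'}

attribute [local instance] Classical.propDecidable

lemma p_vertex (hp : IsCovering Ω Λ p) {w : A'} (hw : Ω.IsVertex w) :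
    Λ.IsVertex (p w) := by
  have h := hp.hom.1 w
  rw [hw] at h
  exact h.symm

lemma p_src_of (hp : IsCovering Ω Λ p) {μ : A} {w : A'} (hw : Ω.IsVertex w)
    (h2 : FΛ.i (p w) = FΛ.G.src (FΛ.i μ)) : p w = Λ.src μ :=
  i_vertex_inj FΛ (p_vertex hp hw) (Λ.src_src μ) (by rw [h2, ← FΛ.i_hom.1])

lemma p_rng_of (hp : IsCovering Ω Λ p) {μ : A} {w : A'} (hw : Ω.IsVertex w)
    (h2 : FΛ.i (p w) = FΛ.G.rng (FΛ.i μ)) : p w = Λ.rng μ :=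
  i_vertex_inj FΛ (p_vertex hp hw) (Λ.src_rng μ) (by rw [h2, ← FΛ.i_hom.2.1])

/-- The family of source-lifts of `μ`. -/
noncomputable def LmapF (FΛ : FundamentalGroupoid Λ) (FΩ : FundamentalGroupoid Ω)
    (hp : IsCovering Ω Λ p) (μ : A) : A' → FΩ.B := fun w =>
  if h : Ω.IsVertex w ∧ FΛ.i (p w) = FΛ.G.src (FΛ.i μ) then
    FΩ.i (Classical.choose (hp.src_lift w h.1 μ (p_src_of hp h.1 h.2).symm))
  else FΩ.i w

/-- The family of range-lifts of `μ`, inverted. -/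
noncomputable def LmapG (FΛ : FundamentalGroupoid Λ) (FΩ : FundamentalGroupoid Ω)
    (hp : IsCovering Ω Λ p) (μ : A) : A' → FΩ.B := fun w =>
  if h : Ω.IsVertex w ∧ FΛ.i (p w) = FΛ.G.rng (FΛ.i μ) then
    FΩ.G.inv (FΩ.i (Classical.choose
      (hp.rng_lift w h.1 μ (p_rng_of hp h.1 h.2).symm)))
  else FΩ.i w

lemma LmapF_spec (hp : IsCovering Ω Λ p) (μ : A) {w : A'}
    (hw : Ω.IsVertex w) (h2 : FΛ.i (p w) = FΛ.G.src (FΛ.i μ)) :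
    ∃ lam, LmapF FΛ FΩ hp μ w = FΩ.i lam ∧ Ω.src lam = w ∧ p lam = μ := by
  have h := Classical.choose_spec (hp.src_lift w hw μ (p_src_of hp hw h2).symm)
  refine ⟨Classical.choose (hp.src_lift w hw μ (p_src_of hp hw h2).symm),
    ?_, h.1, h.2⟩
  unfold LmapF
  rw [dif_pos ⟨hw, h2⟩]

lemma LmapF_off (hp : IsCovering Ω Λ p) (μ : A) {w : A'}
    (h : ¬ (Ω.IsVertex w ∧ FΛ.i (p w) = FΛ.G.src (FΛ.i μ))) :
    LmapF FΛ FΩ hp μ w = FΩ.i w := by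
  unfold LmapF
  rw [dif_neg h]

lemma LmapF_eq (hp : IsCovering Ω Λ p) (μ : A) {w lam : A'}
    (hw : Ω.IsVertex w) (h2 : FΛ.i (p w) = FΛ.G.src (FΛ.i μ))
    (hs : Ω.src lam = w) (hpl : p lam = μ) :
    LmapF FΛ FΩ hp μ w = FΩ.i lam := by
  obtain ⟨l, he, h1, h3⟩ := LmapF_spec hp μ hw h2
  rw [he, hp.src_inj l lam (by rw [h1, hs]) (by rw [h3, hpl])]

lemma LmapG_spec (hp : IsCovering Ω Λ p) (μ : A) {w : A'}
    (hw : Ω.IsVertex w) (h2 : FΛ.i (p w) = FΛ.G.rng (FΛ.i μ)) :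
    ∃ lam, LmapG FΛ FΩ hp μ w = FΩ.G.inv (FΩ.i lam) ∧
      Ω.rng lam = w ∧ p lam = μ := by
  have h := Classical.choose_spec (hp.rng_lift w hw μ (p_rng_of hp hw h2).symm)
  refine ⟨Classical.choose (hp.rng_lift w hw μ (p_rng_of hp hw h2).symm),
    ?_, h.1, h.2⟩
  unfold LmapG
  rw [dif_pos ⟨hw, h2⟩]

lemma LmapG_off (hp : IsCovering Ω Λ p) (μ : A) {w : A'}
    (h : ¬ (Ω.IsVertex w ∧ FΛ.i (p w) = FΛ.G.rng (FΛ.i μ))) :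
    LmapG FΛ FΩ hp μ w = FΩ.i w := by
  unfold LmapG
  rw [dif_neg h]

lemma LmapG_eq (hp : IsCovering Ω Λ p) (μ : A) {w lam : A'}
    (hw : Ω.IsVertex w) (h2 : FΛ.i (p w) = FΛ.G.rng (FΛ.i μ))
    (hr : Ω.rng lam = w) (hpl : p lam = μ) :
    LmapG FΛ FΩ hp μ w = FΩ.G.inv (FΩ.i lam) := by
  obtain ⟨l, he, h1, h3⟩ := LmapG_spec hp μ hw h2
  rw [he, hp.rng_inj l lam (by rw [h1, hr]) (by rw [h3, hpl])]

lemma good_Lmap (hp : IsCovering Ω Λ p)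
    (hpsti : ∀ a, pst (FΩ.i a) = FΛ.i (p a))
    (hpst : IsGpdHomFun FΩ.G FΛ.G pst)
    (hact : CorrespondingAction Ω Λ FΛ p act) (μ : A) :
    GoodFam FΛ FΩ p pst act (FΛ.i μ) (LmapF FΛ FΩ hp μ) (LmapG FΛ FΩ hp μ) := by
  refine ⟨?_, ?_, ?_, ?_, ?_⟩
  · intro w hw h2
    obtain ⟨lam, he, hs, hpl⟩ := LmapF_spec hp μ hw h2
    rw [he]
    refine ⟨by rw [← FΩ.i_hom.1, hs], by rw [hpsti, hpl], ?_⟩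
    rw [← FΩ.i_hom.2.1, ← hpl, ← hs, hact.act_cov lam]
  · intro w h
    exact LmapF_off hp μ h
  · intro w hw h2
    obtain ⟨lam, he, hr, hpl⟩ := LmapG_spec hp μ hw h2
    rw [he]
    refine ⟨by rw [FΩ.G.src_inv, ← FΩ.i_hom.2.1, hr],
      by rw [IsGpdHomFun.map_inv hpst, hpsti, hpl], ?_⟩
    rw [FΩ.G.rng_inv, ← FΩ.i_hom.1, ← hpl, ← hr, ← hact.act_cov lam,
      act_inv_act hact (Ω.src_src lam) (by rw [hp.hom.1, FΛ.i_hom.1])]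
  · intro w h
    exact LmapG_off hp μ h
  · intro w hw h2
    obtain ⟨lam, he, hs, hpl⟩ := LmapF_spec hp μ hw h2
    have hact1 : act (FΛ.i μ) w = Ω.rng lam := by
      rw [← hpl, ← hs, hact.act_cov lam]
    rw [hact1, he, LmapG_eq hp μ (Ω.src_rng lam)
      (by rw [hp.hom.2.1, hpl, FΛ.i_hom.2.1]) rfl hpl]

/-- The canonical functor `Λ → E` of lift families. -/
noncomputable def Lmap (hp : IsCovering Ω Λ p)
    (hpsti : ∀ a, pst (FΩ.i a) = FΛ.i (p a))
    (hpst : IsGpdHomFun FΩ.G FΛ.G pst)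
    (hact : CorrespondingAction Ω Λ FΛ p act) (μ : A) :
    ECar FΛ FΩ p pst act :=
  ⟨(FΛ.i μ, LmapF FΛ FΩ hp μ, LmapG FΛ FΩ hp μ),
    good_Lmap hp hpsti hpst hact μ⟩

lemma EGpd_comp_val (hpsti : ∀ a, pst (FΩ.i a) = FΛ.i (p a))
    (hpst : IsGpdHomFun FΩ.G FΛ.G pst)
    (hact : CorrespondingAction Ω Λ FΛ p act)
    (x y : ECar FΛ FΩ p pst act)
    (h : FΛ.G.src x.1.1 = FΛ.G.rng y.1.1) :
    ((EGpd hpsti hpst hact).comp x y).1 =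
      (FΛ.G.comp x.1.1 y.1.1,
        fun w => if Ω.IsVertex w ∧ FΛ.i (p w) = FΛ.G.src y.1.1 then
          FΩ.G.comp (x.1.2.1 (act y.1.1 w)) (y.1.2.1 w) else FΩ.i w,
        fun w => if Ω.IsVertex w ∧ FΛ.i (p w) = FΛ.G.rng x.1.1 then
          FΩ.G.comp (y.1.2.2 (act (FΛ.G.inv x.1.1) w)) (x.1.2.2 w)
        else FΩ.i w) := by
  unfold EGpd
  dsimp only
  rw [dif_pos h]

lemma Lmap_hom (hp : IsCovering Ω Λ p)
    (hpsti : ∀ a, pst (FΩ.i a) = FΛ.i (p a))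
    (hpst : IsGpdHomFun FΩ.G FΛ.G pst)
    (hact : CorrespondingAction Ω Λ FΛ p act) :
    IsFunctorToGpdFun Λ (EGpd hpsti hpst hact)
      (Lmap hp hpsti hpst hact) := by
  refine ⟨fun μ => ?_, fun μ => ?_, fun μ ν hμν => ?_⟩
  · apply Subtype.ext
    show (FΛ.i (Λ.src μ), LmapF FΛ FΩ hp (Λ.src μ), LmapG FΛ FΩ hp (Λ.src μ)) =
      (FΛ.G.src (FΛ.i μ), fun w => FΩ.i w, fun w => FΩ.i w)
    simp only [Prod.mk.injEq]
    refine ⟨FΛ.i_hom.1 μ, funext fun w => ?_, funext fun w => ?_⟩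
    · by_cases hc : Ω.IsVertex w ∧ FΛ.i (p w) = FΛ.G.src (FΛ.i (Λ.src μ))
      · have hpw : p w = Λ.src μ := by
          have h := p_src_of hp hc.1 hc.2
          rwa [Λ.src_src] at h
        exact LmapF_eq hp (Λ.src μ) hc.1 hc.2 hc.1 hpw
      · exact LmapF_off hp (Λ.src μ) hc
    · by_cases hc : Ω.IsVertex w ∧ FΛ.i (p w) = FΛ.G.rng (FΛ.i (Λ.src μ))
      · have hpw : p w = Λ.src μ := by
          have h := p_rng_of hp hc.1 hc.2
          rwa [Λ.rng_src] at h
        rw [LmapG_eq hp (Λ.src μ) hc.1 hc.2 (KGraphStruct.rng_vertex hc.1) hpw,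
          FΩ.G.inv_vertex (i_src_vertex FΩ hc.1)]
      · exact LmapG_off hp (Λ.src μ) hc
  · apply Subtype.ext
    show (FΛ.i (Λ.rng μ), LmapF FΛ FΩ hp (Λ.rng μ), LmapG FΛ FΩ hp (Λ.rng μ)) =
      (FΛ.G.rng (FΛ.i μ), fun w => FΩ.i w, fun w => FΩ.i w)
    simp only [Prod.mk.injEq]
    refine ⟨FΛ.i_hom.2.1 μ, funext fun w => ?_, funext fun w => ?_⟩
    · by_cases hc : Ω.IsVertex w ∧ FΛ.i (p w) = FΛ.G.src (FΛ.i (Λ.rng μ))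
      · have hpw : p w = Λ.rng μ := by
          have h := p_src_of hp hc.1 hc.2
          rwa [Λ.src_rng] at h
        exact LmapF_eq hp (Λ.rng μ) hc.1 hc.2 hc.1 hpw
      · exact LmapF_off hp (Λ.rng μ) hc
    · by_cases hc : Ω.IsVertex w ∧ FΛ.i (p w) = FΛ.G.rng (FΛ.i (Λ.rng μ))
      · have hpw : p w = Λ.rng μ := by
          have h := p_rng_of hp hc.1 hc.2
          rwa [Λ.rng_rng] at h
        rw [LmapG_eq hp (Λ.rng μ) hc.1 hc.2 (KGraphStruct.rng_vertex hc.1) hpw,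
          FΩ.G.inv_vertex (i_src_vertex FΩ hc.1)]
      · exact LmapG_off hp (Λ.rng μ) hc
  · have hg : FΛ.G.src (FΛ.i μ) = FΛ.G.rng (FΛ.i ν) := by
      rw [← FΛ.i_hom.1, ← FΛ.i_hom.2.1, hμν]
    apply Subtype.ext
    rw [EGpd_comp_val hpsti hpst hact _ _ hg]
    show (FΛ.i (Λ.comp μ ν), LmapF FΛ FΩ hp (Λ.comp μ ν),
        LmapG FΛ FΩ hp (Λ.comp μ ν)) =
      (FΛ.G.comp (FΛ.i μ) (FΛ.i ν),
        fun w => if Ω.IsVertex w ∧ FΛ.i (p w) = FΛ.G.src (FΛ.i ν) then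
          FΩ.G.comp (LmapF FΛ FΩ hp μ (act (FΛ.i ν) w)) (LmapF FΛ FΩ hp ν w)
        else FΩ.i w,
        fun w => if Ω.IsVertex w ∧ FΛ.i (p w) = FΛ.G.rng (FΛ.i μ) then
          FΩ.G.comp (LmapG FΛ FΩ hp ν (act (FΛ.G.inv (FΛ.i μ)) w))
            (LmapG FΛ FΩ hp μ w)
        else FΩ.i w)
    have hsc : FΛ.G.src (FΛ.i (Λ.comp μ ν)) = FΛ.G.src (FΛ.i ν) := by
      rw [← FΛ.i_hom.1, ← FΛ.i_hom.1, Λ.src_comp _ _ hμν]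
    have hrc : FΛ.G.rng (FΛ.i (Λ.comp μ ν)) = FΛ.G.rng (FΛ.i μ) := by
      rw [← FΛ.i_hom.2.1, ← FΛ.i_hom.2.1, Λ.rng_comp _ _ hμν]
    simp only [Prod.mk.injEq]
    refine ⟨FΛ.i_hom.2.2 _ _ hμν, funext fun w => ?_, funext fun w => ?_⟩
    · by_cases hc : Ω.IsVertex w ∧ FΛ.i (p w) = FΛ.G.src (FΛ.i ν)
      · obtain ⟨lν, heν, hsν, hpν⟩ := LmapF_spec hp ν hc.1 hc.2
        have hrv : Ω.IsVertex (Ω.rng lν) := Ω.src_rng lν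
        have hri : FΛ.i (p (Ω.rng lν)) = FΛ.G.src (FΛ.i μ) := by
          rw [hp.hom.2.1, hpν, ← hμν, FΛ.i_hom.1]
        obtain ⟨lμ, heμ, hsμ, hpμ⟩ := LmapF_spec hp μ hrv hri
        have hguard : Ω.src lμ = Ω.rng lν := hsμ
        have hactv : act (FΛ.i ν) w = Ω.rng lν := by
          rw [← hpν, ← hsν, hact.act_cov]
        rw [if_pos hc, hactv, heμ, heν,
          LmapF_eq hp (Λ.comp μ ν) hc.1 (by rw [hsc]; exact hc.2)
            (show Ω.src (Ω.comp lμ lν) = w by rw [Ω.src_comp _ _ hguard, hsν])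
            (by rw [hp.hom.2.2.1 _ _ hguard, hpμ, hpν]),
          FΩ.i_hom.2.2 _ _ hguard]
      · rw [if_neg hc, LmapF_off hp (Λ.comp μ ν)
          (fun hx => hc ⟨hx.1, by rw [← hsc]; exact hx.2⟩)]
    · by_cases hc : Ω.IsVertex w ∧ FΛ.i (p w) = FΛ.G.rng (FΛ.i μ)
      · obtain ⟨lμ, heμ, hrμ, hpμ⟩ := LmapG_spec hp μ hc.1 hc.2
        have hsv : Ω.IsVertex (Ω.src lμ) := Ω.src_src lμ
        have hsi : FΛ.i (p (Ω.src lμ)) = FΛ.G.rng (FΛ.i ν) := by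
          rw [hp.hom.1, hpμ, hμν, FΛ.i_hom.2.1]
        obtain ⟨lν, heν, hrν, hpν⟩ := LmapG_spec hp ν hsv hsi
        have hguard : Ω.src lμ = Ω.rng lν := hrν.symm
        have hX : act (FΛ.G.inv (FΛ.i μ)) w = Ω.src lμ := by
          rw [← hpμ, ← hrμ, ← hact.act_cov lμ,
            act_inv_act hact (Ω.src_src lμ) (by rw [hp.hom.1, FΛ.i_hom.1])]
        rw [if_pos hc, hX, heν, heμ,
          LmapG_eq hp (Λ.comp μ ν) hc.1 (by rw [hrc]; exact hc.2)
            (show Ω.rng (Ω.comp lμ lν) = w by rw [Ω.rng_comp _ _ hguard, hrμ])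
            (by rw [hp.hom.2.2.1 _ _ hguard, hpμ, hpν]),
          FΩ.i_hom.2.2 _ _ hguard,
          FΩ.G.inv_comp (show FΩ.G.src (FΩ.i lμ) = FΩ.G.rng (FΩ.i lν) by
            rw [← FΩ.i_hom.1, ← FΩ.i_hom.2.1, hguard])]
      · rw [if_neg hc, LmapG_off hp (Λ.comp μ ν)
          (fun hx => hc ⟨hx.1, by rw [← hrc]; exact hx.2⟩)]

end LSec


/-- For a covering `p : Ω → Λ`, the map
`(p₊, s) : 𝒢(Ω) → 𝒢(Λ)*Ω⁰`, `c ↦ (p₊(c), s(c))`, is an isomorphism of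
groupoids onto the transformation groupoid of the corresponding action of
`𝒢(Λ)` on `Ω⁰`.  The transformation groupoid has arrows
`{(a,w) : w ∈ Ω⁰, s(a) = i(p(w))}` with `s(a,w) = (s(a),w)`,
`r(a,w) = (r(a),aw)` and `(a,bw)(b,w) = (ab,w)`, and the isomorphism is
expressed as a bijection transporting source, range and composition. -/
theorem fundamental_groupoid_of_covering_iso {k : ℕ} {A A' : Type}
    (Λ : KGraphStruct k A) (Ω : KGraphStruct k A')
    (FΛ : FundamentalGroupoid Λ) (FΩ : FundamentalGroupoid Ω)
    (p : A' → A) (hp : IsCovering Ω Λ p)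
    (pst : FΩ.B → FΛ.B) (hpst : IsGpdHomFun FΩ.G FΛ.G pst)
    (hpsti : ∀ a, pst (FΩ.i a) = FΛ.i (p a))
    (act : FΛ.B → A' → A') (hact : CorrespondingAction Ω Λ FΛ p act) :
    ∃ Φ : FΩ.B →
        {q : FΛ.B × A' // Ω.IsVertex q.2 ∧ FΛ.G.src q.1 = FΛ.i (p q.2)},
      (∀ c, (Φ c).1.1 = pst c) ∧
      (∀ c w, Ω.IsVertex w → FΩ.i w = FΩ.G.src c → (Φ c).1.2 = w) ∧
      Function.Bijective Φ ∧
      (∀ c, (Φ (FΩ.G.src c)).1 = (FΛ.G.src (pst c), (Φ c).1.2)) ∧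
      (∀ c, (Φ (FΩ.G.rng c)).1 = (FΛ.G.rng (pst c), act (pst c) (Φ c).1.2)) ∧
      (∀ c c', FΩ.G.src c = FΩ.G.rng c' →
        (Φ (FΩ.G.comp c c')).1 = (FΛ.G.comp (pst c) (pst c'), (Φ c').1.2)) := by
  classical
  obtain ⟨Φ, ⟨hΦhom, hΦi⟩, hΦuniq⟩ :=
    FΩ.univ (TGpd hact) (Fmap FΛ hp) (hFmap hp hact)
  have hTsrc1 : ∀ c, (Φ (FΩ.G.src c)).1 = (FΛ.G.src (Φ c).1.1, (Φ c).1.2) := by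
    intro c
    rw [hΦhom.1 c]
    rfl
  have hTrng1 : ∀ c, (Φ (FΩ.G.rng c)).1 =
      (FΛ.G.rng (Φ c).1.1, act (Φ c).1.1 (Φ c).1.2) := by
    intro c
    rw [hΦhom.2.1 c]
    rfl
  have hguard : ∀ c c', FΩ.G.src c = FΩ.G.rng c' →
      FΛ.G.src (Φ c).1.1 = FΛ.G.rng (Φ c').1.1 := by
    intro c c' h
    have h2 : (TGpd hact).src (Φ c) = (TGpd hact).rng (Φ c') := by
      rw [← hΦhom.1 c, ← hΦhom.2.1 c', h]
    exact congrArg (fun t : {q : FΛ.B × A' //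
      Ω.IsVertex q.2 ∧ FΛ.G.src q.1 = FΛ.i (p q.2)} => t.1.1) h2
  have hΦ2eq : ∀ c c', FΩ.G.src c = FΩ.G.rng c' →
      (Φ c).1.2 = act (Φ c').1.1 (Φ c').1.2 := by
    intro c c' h
    have h2 : (TGpd hact).src (Φ c) = (TGpd hact).rng (Φ c') := by
      rw [← hΦhom.1 c, ← hΦhom.2.1 c', h]
    exact congrArg (fun t : {q : FΛ.B × A' //
      Ω.IsVertex q.2 ∧ FΛ.G.src q.1 = FΛ.i (p q.2)} => t.1.2) h2
  have hTcomp1 : ∀ c c', FΩ.G.src c = FΩ.G.rng c' →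
      (Φ (FΩ.G.comp c c')).1 =
        (FΛ.G.comp (Φ c).1.1 (Φ c').1.1, (Φ c').1.2) := by
    intro c c' h
    rw [hΦhom.2.2 c c' h, TGpd_comp_val hact _ _ (hguard c c' h)]
  have hJ : IsFunctorToGpdFun Ω FΛ.G (fun lam => FΛ.i (p lam)) := by
    refine ⟨fun lam => ?_, fun lam => ?_, fun lam mu h => ?_⟩
    · dsimp only
      rw [hp.hom.1, FΛ.i_hom.1]
    · dsimp only
      rw [hp.hom.2.1, FΛ.i_hom.2.1]
    · dsimp only
      rw [hp.hom.2.2.1 _ _ h,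
        FΛ.i_hom.2.2 _ _ (by rw [← hp.hom.1, ← hp.hom.2.1, h])]
  obtain ⟨J', hJ'p, hJuniq⟩ := FΩ.univ FΛ.G _ hJ
  have hpr1hom : IsGpdHomFun FΩ.G FΛ.G (fun c => (Φ c).1.1) := by
    refine ⟨fun c => ?_, fun c => ?_, fun c c' h => ?_⟩
    · show (Φ (FΩ.G.src c)).1.1 = _
      rw [hTsrc1 c]
    · show (Φ (FΩ.G.rng c)).1.1 = _
      rw [hTrng1 c]
    · show (Φ (FΩ.G.comp c c')).1.1 = _
      rw [hTcomp1 c c' h]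
  have hps : pst = fun c => (Φ c).1.1 := by
    rw [hJuniq pst ⟨hpst, hpsti⟩,
      hJuniq (fun c => (Φ c).1.1) ⟨hpr1hom, fun lam => by
        show (Φ (FΩ.i lam)).1.1 = FΛ.i (p lam)
        rw [hΦi lam]
        rfl⟩]
  have hpr1 : ∀ c, (Φ c).1.1 = pst c := fun c => by rw [hps]
  have hb2 : ∀ c w, Ω.IsVertex w → FΩ.i w = FΩ.G.src c → (Φ c).1.2 = w := by
    intro c w hw he
    have h1 : (Φ (FΩ.G.src c)).1.2 = (Φ c).1.2 := by rw [hTsrc1 c]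
    have h2 : (Φ (FΩ.i w)).1.2 = Ω.src w := by
      rw [hΦi w]
      rfl
    rw [← h1, ← he, h2, hw]
  -- the inverse functor via lift families
  obtain ⟨L', ⟨hLhom, hLi⟩, hLuniq⟩ := FΛ.univ (EGpd hpsti hpst hact)
    (Lmap hp hpsti hpst hact) (Lmap_hom hp hpsti hpst hact)
  have hEguard : ∀ a b, FΛ.G.src a = FΛ.G.rng b →
      FΛ.G.src (L' a).1.1 = FΛ.G.rng (L' b).1.1 := by
    intro a b h
    have h2 : (EGpd hpsti hpst hact).src (L' a) =
        (EGpd hpsti hpst hact).rng (L' b) := by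
      rw [← hLhom.1 a, ← hLhom.2.1 b, h]
    exact congrArg (fun t : ECar FΛ FΩ p pst act => t.1.1) h2
  have hL1hom : IsGpdHomFun FΛ.G FΛ.G (fun a => (L' a).1.1) := by
    refine ⟨fun a => ?_, fun a => ?_, fun a b h => ?_⟩
    · show (L' (FΛ.G.src a)).1.1 = _
      rw [hLhom.1 a]
      rfl
    · show (L' (FΛ.G.rng a)).1.1 = _
      rw [hLhom.2.1 a]
      rfl
    · show (L' (FΛ.G.comp a b)).1.1 = _
      rw [hLhom.2.2 a b h,
        EGpd_comp_val hpsti hpst hact _ _ (hEguard a b h)]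
  obtain ⟨I', hI'p, hIuniq⟩ := FΛ.univ FΛ.G FΛ.i FΛ.i_hom
  have hL1 : ∀ a, (L' a).1.1 = a := by
    have e1 : (fun a => (L' a).1.1) = I' :=
      hIuniq _ ⟨hL1hom, fun μ => by dsimp only; rw [hLi μ]; rfl⟩
    have e2 : (fun a : FΛ.B => a) = I' :=
      hIuniq _ ⟨⟨fun _ => rfl, fun _ => rfl, fun _ _ _ => rfl⟩, fun _ => rfl⟩
    intro a
    exact congrFun (e1.trans e2.symm) a
  have hGood : ∀ a, GoodFam FΛ FΩ p pst act a (L' a).1.2.1 (L' a).1.2.2 := by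
    intro a
    have h := (L' a).2
    rwa [hL1 a] at h
  have hLsrc : ∀ a : FΛ.B, (L' (FΛ.G.src a)).1.2.1 = fun w => FΩ.i w := by
    intro a
    rw [hLhom.1 a]
    rfl
  have hLrng : ∀ a : FΛ.B, (L' (FΛ.G.rng a)).1.2.1 = fun w => FΩ.i w := by
    intro a
    rw [hLhom.2.1 a]
    rfl
  have hΨΦhom : IsGpdHomFun FΩ.G FΩ.G
      (fun c => (L' (Φ c).1.1).1.2.1 (Φ c).1.2) := by
    refine ⟨fun c => ?_, fun c => ?_, fun c c' h => ?_⟩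
    · show (L' (Φ (FΩ.G.src c)).1.1).1.2.1 (Φ (FΩ.G.src c)).1.2 = _
      rw [hTsrc1 c]
      dsimp only
      rw [hLsrc ((Φ c).1.1),
        ((hGood (Φ c).1.1).1 _ (Φ c).2.1 (Φ c).2.2.symm).1]
    · show (L' (Φ (FΩ.G.rng c)).1.1).1.2.1 (Φ (FΩ.G.rng c)).1.2 = _
      rw [hTrng1 c]
      dsimp only
      rw [hLrng ((Φ c).1.1),
        ((hGood (Φ c).1.1).1 _ (Φ c).2.1 (Φ c).2.2.symm).2.2]
    · show (L' (Φ (FΩ.G.comp c c')).1.1).1.2.1 (Φ (FΩ.G.comp c c')).1.2 = _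
      rw [hTcomp1 c c' h]
      dsimp only
      rw [hLhom.2.2 _ _ (hguard c c' h),
        EGpd_comp_val hpsti hpst hact _ _ (hEguard _ _ (hguard c c' h))]
      dsimp only
      rw [hL1 ((Φ c').1.1),
        if_pos (show Ω.IsVertex (Φ c').1.2 ∧
          FΛ.i (p (Φ c').1.2) = FΛ.G.src (Φ c').1.1 from
          ⟨(Φ c').2.1, (Φ c').2.2.symm⟩),
        ← hΦ2eq c c' h]
  have hΨΦi : ∀ lam, (L' (Φ (FΩ.i lam)).1.1).1.2.1 (Φ (FΩ.i lam)).1.2 =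
      FΩ.i lam := by
    intro lam
    rw [hΦi lam]
    show (L' (FΛ.i (p lam))).1.2.1 (Ω.src lam) = FΩ.i lam
    rw [hLi (p lam)]
    show LmapF FΛ FΩ hp (p lam) (Ω.src lam) = FΩ.i lam
    exact LmapF_eq hp (p lam) (Ω.src_src lam)
      (by rw [hp.hom.1, FΛ.i_hom.1]) rfl rfl
  obtain ⟨Id', hId'p, hIduniq⟩ := FΩ.univ FΩ.G FΩ.i FΩ.i_hom
  have hΨΦ : ∀ c, (L' (Φ c).1.1).1.2.1 (Φ c).1.2 = c := by
    have e1 : (fun c => (L' (Φ c).1.1).1.2.1 (Φ c).1.2) = Id' :=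
      hIduniq _ ⟨hΨΦhom, hΨΦi⟩
    have e2 : (fun c : FΩ.B => c) = Id' :=
      hIduniq _ ⟨⟨fun _ => rfl, fun _ => rfl, fun _ _ _ => rfl⟩, fun _ => rfl⟩
    intro c
    exact congrFun (e1.trans e2.symm) c
  have hinj : Function.Injective Φ := by
    intro c c' h
    have h1 := hΨΦ c
    rw [h] at h1
    rw [← hΨΦ c', h1]
  have hsurj : Function.Surjective Φ := by
    intro t
    refine ⟨(L' t.1.1).1.2.1 t.1.2, ?_⟩
    have hg := (hGood t.1.1).1 t.1.2 t.2.1 t.2.2.symm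
    have h1 : (Φ ((L' t.1.1).1.2.1 t.1.2)).1.1 = t.1.1 := by
      rw [hpr1, hg.2.1]
    have h2 : (Φ ((L' t.1.1).1.2.1 t.1.2)).1.2 = t.1.2 :=
      hb2 _ _ t.2.1 hg.1.symm
    exact Subtype.ext (Prod.ext h1 h2)
  refine ⟨Φ, hpr1, hb2, ⟨hinj, hsurj⟩, fun c => by rw [hTsrc1 c, hpr1 c],
    fun c => by rw [hTrng1 c, hpr1 c],
    fun c c' h => by rw [hTcomp1 c c' h, hpr1 c, hpr1 c']⟩

end KGraphCovering
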